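/- The space 𝒳 is a Fréchet (Fréchet–Urysohn) compact space that is not bisequential: for every subset 𝒜 ⊆ 𝒳 and every point x in the closure of 𝒜 there is a sequence of elements of 𝒜 converging to x, yet 𝒳 is not bisequential. -/

import Mathlib

open Cardinal Filter Topology Set

noncomputable section
open Classical

/-- `ω₁`, the first uncountable ordinal, viewed as the linearly ordered type of
all countable ordinals. -/
abbrev Omega1 : Type 1 := ↥(Set.Iio (Cardinal.aleph 1).ord)

/-- The vertical section `A_α = {β : (α, β) ∈ A}`. -/
def vertSection (A : Set (Omega1 × Omega1)) (α : Omega1) : Set Omega1 :=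
  {β | (α, β) ∈ A}

/-- The horizontal section `A^α = {γ : (γ, α) ∈ A}`. -/
def horSection (A : Set (Omega1 × Omega1)) (α : Omega1) : Set Omega1 :=
  {γ | (γ, α) ∈ A}

/-- Membership in the σ-ideal `𝓘`: for all but countably many `α ∈ ω₁` both the
vertical and the horizontal section of `A` at `α` are countable. -/
def MemIdealI (A : Set (Omega1 × Omega1)) : Prop :=
  {α : Omega1 | ¬ ((vertSection A α).Countable ∧ (horSection A α).Countable)}.Countable

/-- `F` is a finite graph of a strictly decreasing partial function: `F` is finite,
contains no two pairs with the same first coordinate, and whenever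
`(α,β), (α',β') ∈ F` with `α < α'` then `β > β'`. -/
def IsDecGraph {T : Type*} [LinearOrder T] (F : Set (T × T)) : Prop :=
  F.Finite ∧ (∀ p ∈ F, ∀ q ∈ F, p.1 = q.1 → p = q) ∧
    (∀ p ∈ F, ∀ q ∈ F, p.1 < q.1 → q.2 < p.2)

/-- The characteristic function of a set, with values in `{0,1} = Bool`. -/
def chi {T : Type*} (A : Set T) : T → Bool := fun x => if x ∈ A then true else false

/-- The space `𝒳` (over a linear order `T`) of characteristic functions of finite
graphs of strictly decreasing partial functions on `T`, viewed as a subset of the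
product space `{0,1}^(T × T)`; it carries the subspace topology. -/
def XSpace (T : Type*) [LinearOrder T] : Set ((T × T) → Bool) :=
  {f | ∃ F : Set (T × T), IsDecGraph F ∧ f = chi F}

/-- The space `𝒳_B = {A ∈ 𝒳 : A ⊆ B}`, as a subset of `{0,1}^(ω₁ × ω₁)`. -/
def XSpaceIn (B : Set (Omega1 × Omega1)) : Set ((Omega1 × Omega1) → Bool) :=
  {f | ∃ F : Set (Omega1 × Omega1), IsDecGraph F ∧ F ⊆ B ∧ f = chi F}

/-- The support of a point of `{0,1}^T`: the set of which it is the
characteristic function. -/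
def supp {T : Type*} (f : T → Bool) : Set T := {x | f x = true}

/-- A topological space `X` is bisequential if for every ultrafilter `𝒰` on `X`
converging to a point `x` (every neighbourhood of `x` belongs to `𝒰`) there is a
decreasing sequence `U₀ ⊇ U₁ ⊇ ⋯` of members of `𝒰` converging to `x` (every
neighbourhood of `x` contains `Uₙ` for all sufficiently large `n`). -/
def Bisequential (X : Type*) [TopologicalSpace X] : Prop :=
  ∀ (𝒰 : Ultrafilter X) (x : X), (𝒰 : Filter X) ≤ 𝓝 x →
    ∃ U : ℕ → Set X, (∀ n, U n ∈ 𝒰) ∧ (∀ n, U (n + 1) ⊆ U n) ∧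
      ∀ V ∈ 𝓝 x, ∀ᶠ n in atTop, U n ⊆ V

/-! ### Basic facts about `ω₁` -/

lemma omega1_not_countable : ¬ (Set.univ : Set Omega1).Countable := by
  intro h
  have h0 : Countable Omega1 := Set.countable_univ_iff.mp h
  have h1 : #Omega1 ≤ Cardinal.aleph0.{1} := Cardinal.mk_le_aleph0_iff.mpr h0
  have h2 : #Omega1 = Cardinal.lift.{1,0} (Cardinal.aleph.{0} 1) := by
    rw [Ordinal.mk_Iio_ordinal, Cardinal.card_ord]
  rw [h2] at h1
  have h3 : Cardinal.lift.{1,0} Cardinal.aleph0.{0} < Cardinal.lift.{1,0} (Cardinal.aleph.{0} 1) :=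
    Cardinal.lift_lt.mpr Cardinal.aleph0_lt_aleph_one
  rw [Cardinal.lift_aleph0] at h3
  exact absurd (h3.trans_le h1) (lt_irrefl _)

lemma omega1_Iio_countable (a : Omega1) : (Set.Iio a).Countable := by
  rw [Cardinal.countable_iff_lt_aleph_one]
  have hinj : #(Set.Iio a) ≤ #(Set.Iio (a : Ordinal)) := by
    have hf : ∀ x : Set.Iio a, (x.val : Ordinal) ∈ Set.Iio (a : Ordinal) := by
      intro x
      have h2 : x.val < a := x.2
      exact Subtype.coe_lt_coe.mpr h2
    apply Cardinal.mk_le_of_injective (f := fun x => ⟨x.val.val, hf x⟩)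
    intro x y hxy
    have h' : (↑↑x : Ordinal) = ↑↑y := by simpa using hxy
    ext1
    exact Subtype.ext h'
  rw [Ordinal.mk_Iio_ordinal] at hinj
  have hcard : (a : Ordinal).card ≤ Cardinal.aleph0.{0} := by
    have h := Cardinal.lt_ord.mp a.2
    exact Order.lt_succ_iff.mp (by rwa [Cardinal.succ_aleph0])
  calc #(Set.Iio a) ≤ Cardinal.lift.{1,0} (a : Ordinal).card := hinj
    _ ≤ Cardinal.lift.{1,0} Cardinal.aleph0.{0} := Cardinal.lift_le.mpr hcard
    _ = Cardinal.aleph0.{1} := Cardinal.lift_aleph0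
    _ < ℵ₁ := Cardinal.aleph0_lt_aleph_one

lemma omega1_Iic_countable (a : Omega1) : (Set.Iic a).Countable := by
  have : Set.Iic a = insert a (Set.Iio a) := by
    ext x; simp [le_iff_lt_or_eq, Set.mem_insert_iff, or_comm]
  rw [this]
  exact (omega1_Iio_countable a).insert a

lemma uncountable_exists_gt {T : Set Omega1} (hT : ¬ T.Countable) (a : Omega1) :
    ∃ x ∈ T, a < x := by
  by_contra h
  push_neg at h
  exact hT ((omega1_Iic_countable a).mono h)

lemma uncountable_nonempty {T : Set Omega1} (hT : ¬ T.Countable) : T.Nonempty := by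
  rcases Set.eq_empty_or_nonempty T with h | h
  · exact absurd (h ▸ Set.countable_empty) hT
  · exact h

lemma cocountable_nonempty {T : Set Omega1} (hT : Tᶜ.Countable) : T.Nonempty := by
  apply uncountable_nonempty
  intro h
  exact omega1_not_countable (by simpa using h.union hT)

lemma uncountable_diff {S C : Set Omega1} (hS : ¬ S.Countable) (hC : C.Countable) :
    ¬ (S \ C).Countable := by
  intro h
  exact hS (((h.union hC).mono) (fun x hx => by
    by_cases hc : x ∈ C
    · exact Or.inr hc
    · exact Or.inl ⟨hx, hc⟩))

/-! ### Basic facts about `chi`, `supp`, `XSpace` -/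

lemma supp_chi {T : Type*} (A : Set T) : supp (chi A) = A := by
  ext x; by_cases h : x ∈ A <;> simp [supp, chi, h]

lemma chi_supp {T : Type*} (f : T → Bool) : chi (supp f) = f := by
  funext x; cases h : f x <;> simp [chi, supp, h]

lemma omega1_wf : WellFounded ((· < ·) : Omega1 → Omega1 → Prop) := wellFounded_lt

lemma decGraph_finite {F : Set (Omega1 × Omega1)}
    (h1 : ∀ p ∈ F, ∀ q ∈ F, p.1 = q.1 → p = q)
    (h2 : ∀ p ∈ F, ∀ q ∈ F, p.1 < q.1 → q.2 < p.2) : F.Finite := by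
  have key : ∀ b : Omega1, ∀ G : Set (Omega1 × Omega1), G ⊆ F → (∀ p ∈ G, p.2 < b) →
      G.Finite := by
    intro b
    induction b using omega1_wf.induction with
    | _ b ih =>
      intro G hGF hGb
      rcases Set.eq_empty_or_nonempty G with hG | hG
      · simp [hG]
      · have hne : (Prod.fst '' G).Nonempty := hG.image _
        obtain ⟨α₀, hα₀, hmin⟩ := omega1_wf.has_min _ hne
        obtain ⟨p₀, hp₀G, hp₀1⟩ := hα₀
        have hrest : ∀ p ∈ G \ {p₀}, p.2 < p₀.2 := by
          intro p hp
          have hpG := hp.1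
          have hne' : p ≠ p₀ := hp.2
          have h1' : p.1 ≠ α₀ := by
            intro he
            exact hne' (h1 p (hGF hpG) p₀ (hGF hp₀G) (he.trans hp₀1.symm))
          have hnlt : ¬ p.1 < α₀ := hmin p.1 ⟨p, hpG, rfl⟩
          have : α₀ < p.1 := lt_of_le_of_ne (not_lt.mp hnlt) (Ne.symm h1')
          exact h2 p₀ (hGF hp₀G) p (hGF hpG) (hp₀1 ▸ this)
        have hfin : (G \ {p₀}).Finite :=
          ih p₀.2 (hGb p₀ hp₀G) (G \ {p₀}) (fun p hp => hGF hp.1) hrest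
        have : G ⊆ insert p₀ (G \ {p₀}) := by
          intro p hp
          by_cases h : p = p₀ <;> simp [h, hp, Set.mem_diff]
        exact (hfin.insert p₀).subset this
  rcases Set.eq_empty_or_nonempty F with hF | hF
  · simp [hF]
  · have hne : (Prod.fst '' F).Nonempty := hF.image _
    obtain ⟨α₀, hα₀, hmin⟩ := omega1_wf.has_min _ hne
    obtain ⟨p₀, hp₀F, hp₀1⟩ := hα₀
    have hrest : ∀ p ∈ F \ {p₀}, p.2 < p₀.2 := by
      intro p hp
      have h1' : p.1 ≠ α₀ := by
        intro he
        exact hp.2 (h1 p hp.1 p₀ hp₀F (he.trans hp₀1.symm))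
      have hnlt : ¬ p.1 < α₀ := hmin p.1 ⟨p, hp.1, rfl⟩
      have : α₀ < p.1 := lt_of_le_of_ne (not_lt.mp hnlt) (Ne.symm h1')
      exact h2 p₀ hp₀F p hp.1 (hp₀1 ▸ this)
    have hfin : (F \ {p₀}).Finite := key p₀.2 _ (fun p hp => hp.1) hrest
    have : F ⊆ insert p₀ (F \ {p₀}) := by
      intro p hp
      by_cases h : p = p₀ <;> simp [h, hp, Set.mem_diff]
    exact (hfin.insert p₀).subset this

lemma XSpace_eq : XSpace Omega1 = {f | ∀ p q, f p = true → f q = true →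
    (p.1 = q.1 → p = q) ∧ (p.1 < q.1 → q.2 < p.2)} := by
  ext f
  constructor
  · rintro ⟨F, ⟨hFin, h1, h2⟩, rfl⟩ p q hp hq
    have hp' : p ∈ F := by by_contra h; simp [chi, h] at hp
    have hq' : q ∈ F := by by_contra h; simp [chi, h] at hq
    exact ⟨h1 p hp' q hq', h2 p hp' q hq'⟩
  · intro hf
    refine ⟨supp f, ⟨?_, ?_, ?_⟩, (chi_supp f).symm⟩
    · exact decGraph_finite (fun p hp q hq => (hf p q hp hq).1)
        (fun p hp q hq => (hf p q hp hq).2)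
    · exact fun p hp q hq => (hf p q hp hq).1
    · exact fun p hp q hq => (hf p q hp hq).2

lemma isClosed_XSpace : IsClosed (XSpace Omega1) := by
  rw [XSpace_eq]
  have : {f : (Omega1 × Omega1) → Bool | ∀ p q, f p = true → f q = true →
      (p.1 = q.1 → p = q) ∧ (p.1 < q.1 → q.2 < p.2)} =
      ⋂ (p) (q), {f : (Omega1 × Omega1) → Bool | f p = true → f q = true →
      (p.1 = q.1 → p = q) ∧ (p.1 < q.1 → q.2 < p.2)} := by
    ext f; simp
  rw [this]
  apply isClosed_iInter; intro p
  apply isClosed_iInter; intro q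
  by_cases hC : (p.1 = q.1 → p = q) ∧ (p.1 < q.1 → q.2 < p.2)
  · have : {f : (Omega1 × Omega1) → Bool | f p = true → f q = true →
        (p.1 = q.1 → p = q) ∧ (p.1 < q.1 → q.2 < p.2)} = Set.univ := by
      ext f
      simp only [Set.mem_setOf_eq, Set.mem_univ, iff_true]
      exact fun _ _ => hC
    rw [this]; exact isClosed_univ
  · have : {f : (Omega1 × Omega1) → Bool | f p = true → f q = true →
        (p.1 = q.1 → p = q) ∧ (p.1 < q.1 → q.2 < p.2)} =
        ((fun f : (Omega1 × Omega1) → Bool => f p) ⁻¹' {true})ᶜ ∪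
        ((fun f : (Omega1 × Omega1) → Bool => f q) ⁻¹' {true})ᶜ := by
      ext f
      simp only [Set.mem_setOf_eq, Set.mem_union, Set.mem_compl_iff, Set.mem_preimage,
        Set.mem_singleton_iff]
      constructor
      · intro h
        by_contra hcon
        push_neg at hcon
        exact hC (h hcon.1 hcon.2)
      · rintro (h | h) hp hq
        · exact absurd hp h
        · exact absurd hq h
    rw [this]
    exact (((isOpen_discrete _).preimage (continuous_apply p)).isClosed_compl).union
      (((isOpen_discrete _).preimage (continuous_apply q)).isClosed_compl)

lemma suppX_finite (g : ↥(XSpace Omega1)) : (supp (g : (Omega1 × Omega1) → Bool)).Finite := by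
  obtain ⟨F, hF, hFe⟩ := g.2
  rw [hFe, supp_chi]
  exact hF.1

/-! ### Neighbourhood basis in the subspace -/

lemma nhds_basis_pt (x : ↥(XSpace Omega1)) {U : Set ↥(XSpace Omega1)} (hU : U ∈ 𝓝 x) :
    ∃ I : Set (Omega1 × Omega1), I.Finite ∧
      ∀ g : ↥(XSpace Omega1), (∀ c ∈ I, (g : (Omega1 × Omega1) → Bool) c =
        (x : (Omega1 × Omega1) → Bool) c) → g ∈ U := by
  obtain ⟨a, hax⟩ := x
  rw [nhds_subtype_eq_comap] at hU
  obtain ⟨W, hW, hWU⟩ := Filter.mem_comap.mp hU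
  rw [nhds_pi, Filter.mem_pi] at hW
  obtain ⟨I, hIfin, t, ht, hsub⟩ := hW
  refine ⟨I, hIfin, fun g hg => hWU ?_⟩
  apply hsub
  intro c hc
  have h1 := ht c
  rw [nhds_discrete Bool] at h1
  rw [Filter.mem_pure] at h1
  rw [hg c hc]
  exact h1

/-! ### The σ-complete filter and the non-bisequentiality ultrafilter -/

/-- `B` is large: for all but countably many `β`, the horizontal section of `B` at `β`
is co-countable.  This is a countably complete condition. -/
def FF (B : Set (Omega1 × Omega1)) : Prop :=
  ({β : Omega1 | {α : Omega1 | (α, β) ∈ B}ᶜ.Countable}ᶜ).Countable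

lemma pick_mono (T : ℕ → Set Omega1) (hT : ∀ n, ¬ (T n).Countable) :
    ∃ g : ℕ → Omega1, StrictMono g ∧ ∀ n, g n ∈ T n := by
  have h0 := uncountable_nonempty (hT 0)
  let g : ℕ → Omega1 := fun n => Nat.rec h0.choose
    (fun n prev => (uncountable_exists_gt (hT (n+1)) prev).choose) n
  have hmem : ∀ n, g n ∈ T n := by
    intro n
    cases n with
    | zero => exact h0.choose_spec
    | succ m => exact (uncountable_exists_gt (hT (m+1)) (g m)).choose_spec.1
  have hlt : ∀ n, g n < g (n + 1) := by
    intro n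
    exact (uncountable_exists_gt (hT (n+1)) (g n)).choose_spec.2
  exact ⟨g, strictMono_nat_of_lt_succ hlt, hmem⟩

lemma buildF (k : ℕ) (B : ℕ → Set (Omega1 × Omega1)) (hB : ∀ i < k, ¬ FF (B i))
    (C : Set Omega1) (hC : C.Countable) :
    ∃ F : Set (Omega1 × Omega1), IsDecGraph F ∧ (∀ p ∈ F, p.1 ∉ C) ∧
      ∀ i < k, ∃ p ∈ F, p ∉ B i := by
  have hPβ : ∀ i < k, ¬ ({β : Omega1 | ¬ ({α : Omega1 | (α, β) ∈ B i}ᶜ).Countable}).Countable := by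
    intro i hi
    have h := hB i hi
    rw [FF] at h
    rwa [Set.compl_setOf] at h
  set T : ℕ → Set Omega1 := fun j =>
    if hj : j < k then {β : Omega1 | ¬ ({α : Omega1 | (α, β) ∈ B (k-1-j)}ᶜ).Countable}
    else Set.univ with hTdef
  have hTu : ∀ j, ¬ (T j).Countable := by
    intro j
    by_cases hj : j < k
    · simpa [hTdef, hj] using hPβ (k-1-j) (by omega)
    · simpa [hTdef, hj] using omega1_not_countable
  obtain ⟨γ, hγmono, hγmem⟩ := pick_mono T hTu
  have hβ : ∀ i < k, ¬ ({α : Omega1 | (α, γ (k-1-i)) ∈ B i}ᶜ).Countable := by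
    intro i hi
    have h1 := hγmem (k-1-i)
    have h2 : k-1-(k-1-i) = i := by omega
    have h3 : k-1-i < k := by omega
    rw [hTdef] at h1
    simp only [dif_pos h3, h2] at h1
    exact h1
  set T' : ℕ → Set Omega1 := fun j =>
    if hj : j < k then ({α : Omega1 | (α, γ (k-1-j)) ∈ B j}ᶜ \ C) else Cᶜ with hT'def
  have hT'u : ∀ j, ¬ (T' j).Countable := by
    intro j
    by_cases hj : j < k
    · simpa [hT'def, hj] using uncountable_diff (hβ j hj) hC
    · have : ¬ (Cᶜ : Set Omega1).Countable := by
        intro h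
        exact omega1_not_countable (by simpa using hC.union h)
      simpa [hT'def, hj] using this
  obtain ⟨δ, hδmono, hδmem⟩ := pick_mono T' hT'u
  have hδ : ∀ i < k, δ i ∈ {α : Omega1 | (α, γ (k-1-i)) ∈ B i}ᶜ \ C := by
    intro i hi
    have h := hδmem i
    simp only [hT'def, dif_pos hi] at h
    exact h
  refine ⟨(fun i => (δ i, γ (k-1-i))) '' (Set.Iio k), ⟨?_, ?_, ?_⟩, ?_, ?_⟩
  · exact (Set.finite_Iio k).image _
  · rintro p ⟨i, hi, rfl⟩ q ⟨j, hj, rfl⟩ h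
    have : i = j := hδmono.injective h
    rw [this]
  · rintro p ⟨i, hi, rfl⟩ q ⟨j, hj, rfl⟩ h
    have hij : i < j := hδmono.lt_iff_lt.mp h
    exact hγmono (by simp only [Set.mem_Iio] at hi hj; omega)
  · rintro p ⟨i, hi, rfl⟩
    exact (hδ i hi).2
  · intro i hi
    exact ⟨(δ i, γ (k-1-i)), ⟨i, hi, rfl⟩, (hδ i hi).1⟩

lemma empty_decGraph : IsDecGraph (∅ : Set (Omega1 × Omega1)) :=
  ⟨Set.finite_empty, by simp, by simp⟩

/-- The empty function, as a point of `𝒳`. -/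
def x0 : ↥(XSpace Omega1) := ⟨chi ∅, ∅, empty_decGraph, rfl⟩

/-- The subspace `𝒳_B` as a subset of the subtype. -/
def XB (B : Set (Omega1 × Omega1)) : Set ↥(XSpace Omega1) :=
  {g | supp (g : (Omega1 × Omega1) → Bool) ⊆ B}

/-- The co-ideal family generating (together with the neighbourhoods of `x0`)
the ultrafilter witnessing non-bisequentiality. -/
def GG : Set (Set ↥(XSpace Omega1)) := {s | ∃ B, ¬ FF B ∧ s = (XB B)ᶜ}

lemma neBot_L : Filter.NeBot (𝓝 x0 ⊓ Filter.generate GG) := by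
  rw [Filter.neBot_iff]
  intro hbot
  rw [Filter.inf_eq_bot_iff] at hbot
  obtain ⟨U, hU, W, hW, hUW⟩ := hbot
  rw [Filter.mem_generate_iff] at hW
  obtain ⟨t, htGG, htfin, htW⟩ := hW
  obtain ⟨I, hIfin, hI⟩ := nhds_basis_pt x0 hU
  set lst := htfin.toFinset.toList with hlst
  set k := lst.length with hk
  have hmem_lst : ∀ s ∈ lst, s ∈ GG := by
    intro s hs
    apply htGG
    rw [hlst, Finset.mem_toList, Set.Finite.mem_toFinset] at hs
    exact hs
  set Bof : Set ↥(XSpace Omega1) → Set (Omega1 × Omega1) :=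
    fun s => if h : s ∈ GG then h.choose else ∅ with hBofdef
  have hBof : ∀ s ∈ GG, ¬ FF (Bof s) ∧ s = (XB (Bof s))ᶜ := by
    intro s hs
    simp only [hBofdef, dif_pos hs]
    exact hs.choose_spec
  set B : ℕ → Set (Omega1 × Omega1) :=
    fun i => if h : i < k then Bof (lst.get ⟨i, h⟩) else ∅ with hBdef
  have hBk : ∀ i < k, ¬ FF (B i) := by
    intro i hi
    have h1 : lst.get ⟨i, hi⟩ ∈ lst := List.get_mem lst ⟨i, hi⟩
    have h2 := hBof _ (hmem_lst _ h1)
    simp only [hBdef, dif_pos hi]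
    exact h2.1
  set C := Prod.fst '' I with hC
  have hCc : C.Countable := (hIfin.image _).countable
  obtain ⟨F, hFdec, hFC, hFB⟩ := buildF k B hBk C hCc
  set gF : ↥(XSpace Omega1) := ⟨chi F, F, hFdec, rfl⟩ with hgF
  have hgFU : gF ∈ U := by
    apply hI
    intro c hc
    have h1 : c ∉ F := fun hcF => (hFC c hcF) ⟨c, hc, rfl⟩
    show chi F c = chi ∅ c
    simp [chi, h1]
  have hgFW : gF ∈ ⋂₀ t := by
    intro s hs
    have hslst : s ∈ lst := by
      rw [hlst, Finset.mem_toList, Set.Finite.mem_toFinset]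
      exact hs
    obtain ⟨i, hieq⟩ := List.mem_iff_get.mp hslst
    have hik' : (i : ℕ) < k := i.2
    obtain ⟨p, hpF, hpB⟩ := hFB i.val hik'
    have hsGG := hmem_lst s hslst
    have h2 := hBof s hsGG
    rw [h2.2]
    intro hcon
    apply hpB
    have hBi : B i.val = Bof s := by
      simp only [hBdef, dif_pos hik']
      rw [← hieq]
    rw [hBi]
    apply hcon
    show chi F p = true
    simp [chi, hpF]
  exact Set.eq_empty_iff_forall_notMem.mp hUW gF ⟨hgFU, htW hgFW⟩

lemma not_bisequential_XSpace : ¬ Bisequential ↥(XSpace Omega1) := by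
  intro h
  haveI hne := neBot_L
  set 𝒰 := Ultrafilter.of (𝓝 x0 ⊓ Filter.generate GG) with h𝒰
  have h𝒰le : (𝒰 : Filter ↥(XSpace Omega1)) ≤ 𝓝 x0 ⊓ Filter.generate GG := Ultrafilter.of_le _
  obtain ⟨U, hUm, _hdec, hconv⟩ := h 𝒰 x0 (h𝒰le.trans inf_le_left)
  set Bn : ℕ → Set (Omega1 × Omega1) :=
    fun n => {c | ∃ g ∈ U n, (g : (Omega1 × Omega1) → Bool) c = true} with hBn
  have hFFB : ∀ n, FF (Bn n) := by
    intro n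
    by_contra hnot
    have hGG : (XB (Bn n))ᶜ ∈ GG := ⟨Bn n, hnot, rfl⟩
    have hgen : (XB (Bn n))ᶜ ∈ Filter.generate GG :=
      Filter.mem_generate_iff.mpr ⟨{(XB (Bn n))ᶜ}, Set.singleton_subset_iff.mpr hGG,
        Set.finite_singleton _, by simp⟩
    have hmem : (XB (Bn n))ᶜ ∈ (𝒰 : Filter ↥(XSpace Omega1)) :=
      (h𝒰le.trans inf_le_right) hgen
    have hint : U n ∩ (XB (Bn n))ᶜ ∈ (𝒰 : Filter ↥(XSpace Omega1)) :=
      Filter.inter_mem (hUm n) hmem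
    obtain ⟨g, hg1, hg2⟩ := Filter.nonempty_of_mem hint
    exact hg2 (fun c hc => ⟨g, hg1, hc⟩)
  have h1 : (⋂ n, {β : Omega1 | {α : Omega1 | (α, β) ∈ Bn n}ᶜ.Countable}).Nonempty := by
    apply cocountable_nonempty
    rw [Set.compl_iInter]
    exact Set.countable_iUnion (fun n => hFFB n)
  obtain ⟨β, hβ⟩ := h1
  have h2 : (⋂ n, {α : Omega1 | (α, β) ∈ Bn n}).Nonempty := by
    apply cocountable_nonempty
    rw [Set.compl_iInter]
    exact Set.countable_iUnion (fun n => Set.mem_iInter.mp hβ n)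
  obtain ⟨α, hα⟩ := h2
  set V : Set ↥(XSpace Omega1) := {g | (g : (Omega1 × Omega1) → Bool) (α, β) = false} with hV
  have hVopen : IsOpen V := by
    have : V = (Subtype.val) ⁻¹'
        ((fun h : (Omega1 × Omega1) → Bool => h (α, β)) ⁻¹' {false}) := rfl
    rw [this]
    exact ((isOpen_discrete _).preimage (continuous_apply _)).preimage continuous_subtype_val
  have hx0V : x0 ∈ V := by
    show chi ∅ (α, β) = false
    simp [chi]
  obtain ⟨n, hn⟩ := (hconv V (hVopen.mem_nhds hx0V)).exists
  have hq : (α, β) ∈ Bn n := Set.mem_iInter.mp hα n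
  obtain ⟨g, hgU, hgtrue⟩ := hq
  have hgV : g ∈ V := hn hgU
  rw [hV] at hgV
  simp only [Set.mem_setOf_eq] at hgV
  rw [hgtrue] at hgV
  exact absurd hgV (by simp)

/-! ### The Fréchet property -/

lemma frechet_XSpace (𝒜 : Set ↥(XSpace Omega1)) (x : ↥(XSpace Omega1)) (hx : x ∈ closure 𝒜) :
    ∃ u : ℕ → ↥(XSpace Omega1), (∀ n, u n ∈ 𝒜) ∧ Tendsto u atTop (𝓝 x) := by
  set F := supp (x : (Omega1 × Omega1) → Bool) with hFdef
  have hFfin : F.Finite := suppX_finite x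
  have pick : ∀ D : Set (Omega1 × Omega1), D.Finite →
      ∃ g : ↥(XSpace Omega1), g ∈ 𝒜 ∧ (∀ p ∈ F, (g : (Omega1 × Omega1) → Bool) p = true) ∧
        (∀ p ∈ D, p ∉ F → (g : (Omega1 × Omega1) → Bool) p = false) := by
    intro D hD
    set O : Set ↥(XSpace Omega1) := Subtype.val ⁻¹'
      ((⋂ p ∈ F, (fun h : (Omega1 × Omega1) → Bool => h p) ⁻¹' {true}) ∩
       (⋂ p ∈ {q ∈ D | q ∉ F}, (fun h : (Omega1 × Omega1) → Bool => h p) ⁻¹' {false}))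
      with hO
    have hOopen : IsOpen O := by
      apply IsOpen.preimage continuous_subtype_val
      apply IsOpen.inter
      · exact hFfin.isOpen_biInter
          (fun p _ => (isOpen_discrete _).preimage (continuous_apply p))
      · exact (hD.subset (Set.sep_subset D _)).isOpen_biInter
          (fun p _ => (isOpen_discrete _).preimage (continuous_apply p))
    have hxO : x ∈ O := by
      refine Set.mem_preimage.mpr ⟨?_, ?_⟩
      · apply Set.mem_iInter₂.mpr
        intro p hp
        exact hp
      · apply Set.mem_iInter₂.mpr
        intro p hp
        have : ¬ ((x : (Omega1 × Omega1) → Bool) p = true) := hp.2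
        simp only [Set.mem_preimage, Set.mem_singleton_iff]
        cases hxp : (x : (Omega1 × Omega1) → Bool) p with
        | false => rfl
        | true => exact absurd hxp this
    obtain ⟨g, hgO, hg𝒜⟩ := mem_closure_iff.mp hx O hOopen hxO
    rw [hO, Set.mem_preimage] at hgO
    refine ⟨g, hg𝒜, ?_, ?_⟩
    · intro p hp
      have := Set.mem_iInter₂.mp hgO.1 p hp
      simpa using this
    · intro p hpD hpF
      have := Set.mem_iInter₂.mp hgO.2 p ⟨hpD, hpF⟩
      simpa using this
  choose g hg𝒜 hgF hgD using pick
  let step : (Σ' D : Set (Omega1 × Omega1), D.Finite) → (Σ' D : Set (Omega1 × Omega1), D.Finite) :=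
    fun t => ⟨t.1 ∪ supp ((g t.1 t.2 : ↥(XSpace Omega1)) : (Omega1 × Omega1) → Bool),
      t.2.union (suppX_finite _)⟩
  let Dseq : ℕ → Σ' D : Set (Omega1 × Omega1), D.Finite :=
    fun n => Nat.rec ⟨∅, Set.finite_empty⟩ (fun _ t => step t) n
  let u : ℕ → ↥(XSpace Omega1) := fun n => g (Dseq n).1 (Dseq n).2
  have hDsucc : ∀ n, (Dseq (n+1)).1 = (Dseq n).1 ∪
      supp ((u n : ↥(XSpace Omega1)) : (Omega1 × Omega1) → Bool) := fun n => rfl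
  have hmono : ∀ m n, m ≤ n → (Dseq m).1 ⊆ (Dseq n).1 := by
    intro m n hmn
    induction n with
    | zero => rw [Nat.le_zero.mp hmn]
    | succ nn ih =>
      rcases Nat.lt_or_ge m (nn+1) with h | h
      · have := ih (Nat.lt_succ_iff.mp h)
        rw [hDsucc nn]
        exact this.trans Set.subset_union_left
      · rw [Nat.le_antisymm hmn h]
  refine ⟨u, fun n => hg𝒜 _ _, ?_⟩
  rw [tendsto_subtype_rng, tendsto_pi_nhds]
  intro c
  by_cases hcF : c ∈ F
  · have hall : ∀ n, ((u n : ↥(XSpace Omega1)) : (Omega1 × Omega1) → Bool) c = true :=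
      fun n => hgF _ _ c hcF
    have hxc : (x : (Omega1 × Omega1) → Bool) c = true := hcF
    rw [hxc]
    have : (fun n => ((u n : ↥(XSpace Omega1)) : (Omega1 × Omega1) → Bool) c) =
        fun _ => true := funext hall
    rw [this]
    exact tendsto_const_nhds
  · have hxc : (x : (Omega1 × Omega1) → Bool) c = false := by
      cases hxp : (x : (Omega1 × Omega1) → Bool) c with
      | false => rfl
      | true => exact absurd hxp hcF
    rw [hxc]
    apply tendsto_nhds_of_eventually_eq
    by_cases hex : ∃ m, ((u m : ↥(XSpace Omega1)) : (Omega1 × Omega1) → Bool) c = true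
    · obtain ⟨m, hm⟩ := hex
      filter_upwards [Filter.eventually_ge_atTop (m+1)] with n hn
      have hcD : c ∈ (Dseq (m+1)).1 := by
        rw [hDsucc m]
        exact Or.inr hm
      have hcDn : c ∈ (Dseq n).1 := hmono (m+1) n hn hcD
      exact hgD _ _ c hcDn hcF
    · push_neg at hex
      filter_upwards with n
      cases hun : ((u n : ↥(XSpace Omega1)) : (Omega1 × Omega1) → Bool) c with
      | false => rfl
      | true => exact absurd hun (hex n)

instance : CompactSpace ↥(XSpace Omega1) :=
  isCompact_iff_compactSpace.mp (isClosed_XSpace.isCompact)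

/-- The space `𝒳` is a Fréchet compact space that is not bisequential: every point of
the closure of a subset `𝒜 ⊆ 𝒳` is a limit of a sequence of elements of `𝒜`, `𝒳` is
compact, and yet `𝒳` is not bisequential. -/
theorem XSpace_frechet_compact_not_bisequential :
    (∀ (𝒜 : Set ↥(XSpace Omega1)) (x : ↥(XSpace Omega1)), x ∈ closure 𝒜 →
      ∃ u : ℕ → ↥(XSpace Omega1), (∀ n, u n ∈ 𝒜) ∧ Tendsto u atTop (𝓝 x)) ∧
    CompactSpace ↥(XSpace Omega1) ∧
    ¬ Bisequential ↥(XSpace Omega1) := by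
  refine ⟨frechet_XSpace, inferInstance, not_bisequential_XSpace⟩

end
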